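/- For every permutation-symmetric n×n unitary matrix D (with diagonal entries a and off-diagonal entries b), the diagonal entry satisfies 1 - 2/n ≤ |a| ≤ 1. -/

import Mathlib

lemma sum_one_aux {n : ℕ} (i : Fin n) (x y z w : ℂ) :
    ∑ k : Fin n, (if k = i then x else y) * (if k = i then z else w)
      = x * z + (n - 1 : ℕ) * (y * w) := by
  rw [← Finset.sum_erase_add _ _ (Finset.mem_univ i)]
  rw [Finset.sum_congr rfl (fun k hk => by
    rw [if_neg (Finset.ne_of_mem_erase hk), if_neg (Finset.ne_of_mem_erase hk)])]
  rw [Finset.sum_const, Finset.card_erase_of_mem (Finset.mem_univ i), Finset.card_univ,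
    Fintype.card_fin, if_pos rfl, if_pos rfl, nsmul_eq_mul]
  ring

lemma sum_two_aux {n : ℕ} (i j : Fin n) (h : i ≠ j) (x y z w : ℂ) :
    ∑ k : Fin n, (if k = i then x else y) * (if k = j then z else w)
      = x * w + y * z + (n - 2 : ℕ) * (y * w) := by
  rw [← Finset.sum_erase_add _ _ (Finset.mem_univ j)]
  have hi : i ∈ Finset.univ.erase j := Finset.mem_erase.2 ⟨h, Finset.mem_univ i⟩
  rw [← Finset.sum_erase_add _ _ hi]
  rw [Finset.sum_congr rfl (fun k hk => by
    have hk' := Finset.mem_erase.1 hk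
    have hk'' := Finset.mem_erase.1 hk'.2
    rw [if_neg hk'.1, if_neg hk''.1])]
  rw [Finset.sum_const, Finset.card_erase_of_mem hi, Finset.card_erase_of_mem (Finset.mem_univ j),
    Finset.card_univ, Fintype.card_fin, if_pos rfl, if_pos rfl, if_neg h, if_neg h.symm,
    nsmul_eq_mul]
  have hc : n - 1 - 1 = n - 2 := by omega
  rw [hc]
  ring

/-- For every permutation-symmetric `n × n` unitary matrix `D` (constant diagonal `a`,
constant off-diagonal `b`, `n ≥ 2`), the diagonal entry satisfies `1 - 2/n ≤ |a| ≤ 1`. -/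
theorem symmetric_unitary_diag_bound (n : ℕ) (hn : 2 ≤ n) (a b : ℂ)
    (D : Matrix (Fin n) (Fin n) ℂ)
    (hD : ∀ i j, D i j = if i = j then a else b)
    (hU : D.conjTranspose * D = 1) :
    1 - 2 / (n : ℝ) ≤ ‖a‖ ∧ ‖a‖ ≤ 1 := by
  obtain ⟨m, rfl⟩ : ∃ m, n = m + 2 := ⟨n - 2, by omega⟩
  set i0 : Fin (m + 2) := ⟨0, by omega⟩ with hi0
  set i1 : Fin (m + 2) := ⟨1, by omega⟩ with hi1
  have hne : i0 ≠ i1 := by simp [hi0, hi1, Fin.ext_iff]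
  have h00 := congrFun (congrFun hU i0) i0
  have h01 := congrFun (congrFun hU i0) i1
  simp only [Matrix.mul_apply, Matrix.conjTranspose_apply, Matrix.one_apply, hD,
    apply_ite (star : ℂ → ℂ), if_pos rfl, if_neg hne, if_true, Complex.star_def] at h00 h01
  rw [sum_one_aux] at h00
  rw [sum_two_aux i0 i1 hne] at h01
  have hc1 : ((m + 2 - 1 : ℕ) : ℂ) = (m : ℂ) + 1 := by push_cast; ring
  have hc2 : ((m + 2 - 2 : ℕ) : ℂ) = (m : ℂ) := by push_cast; ring
  rw [hc1] at h00
  rw [hc2] at h01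
  -- eigenvalue equations
  have h1 : (starRingEnd ℂ) (a - b) * (a - b) = 1 := by
    simp only [map_sub]
    linear_combination h00 - h01
  have h2 : (starRingEnd ℂ) (a + ((m : ℂ) + 1) * b) * (a + ((m : ℂ) + 1) * b) = 1 := by
    simp only [map_add, map_mul, map_one, Complex.conj_natCast]
    linear_combination h00 + ((m : ℂ) + 1) * h01
  have hab1 : ‖a - b‖ = 1 := by
    have hns : Complex.normSq (a - b) = 1 := by
      have := (Complex.normSq_eq_conj_mul_self (z := a - b)).trans h1
      exact_mod_cast this
    have := Complex.sq_norm (a - b)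
    nlinarith [norm_nonneg (a - b)]
  have hab2 : ‖a + ((m : ℂ) + 1) * b‖ = 1 := by
    have hns : Complex.normSq (a + ((m : ℂ) + 1) * b) = 1 := by
      have := (Complex.normSq_eq_conj_mul_self (z := a + ((m : ℂ) + 1) * b)).trans h2
      exact_mod_cast this
    have := Complex.sq_norm (a + ((m : ℂ) + 1) * b)
    nlinarith [norm_nonneg (a + ((m : ℂ) + 1) * b)]
  -- |b| ≤ 2 / n
  have hnb : ((m : ℝ) + 2) * ‖b‖ ≤ 2 := by
    have hrw : ((m : ℂ) + 2) * b = (a + ((m : ℂ) + 1) * b) - (a - b) := by ring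
    have hcabs : ‖(m : ℂ) + 2‖ = (m : ℝ) + 2 := by
      rw [show ((m : ℂ) + 2) = ((m + 2 : ℕ) : ℂ) by push_cast; ring, Complex.norm_natCast]
      push_cast; ring
    calc ((m : ℝ) + 2) * ‖b‖
        = ‖((m : ℂ) + 2) * b‖ := by rw [norm_mul, hcabs]
      _ = ‖(a + ((m : ℂ) + 1) * b) - (a - b)‖ := by rw [hrw]
      _ ≤ ‖a + ((m : ℂ) + 1) * b‖ + ‖a - b‖ := by
          rw [sub_eq_add_neg]
          exact le_trans (norm_add_le _ _) (by rw [norm_neg])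
      _ = 2 := by rw [hab1, hab2]; norm_num
  -- lower bound
  have htri : ‖a - b‖ ≤ ‖a‖ + ‖b‖ := by
    rw [sub_eq_add_neg]
    exact le_trans (norm_add_le _ _) (by rw [norm_neg])
  have hnpos : (0 : ℝ) < (m : ℝ) + 2 := by positivity
  constructor
  · have hbb : ‖b‖ ≤ 2 / ((m : ℝ) + 2) := by
      rw [le_div_iff₀ hnpos]; linarith
    have hcast : ((m + 2 : ℕ) : ℝ) = (m : ℝ) + 2 := by push_cast; ring
    rw [hcast]
    linarith
  · have R1 : Complex.normSq a + ((m : ℝ) + 1) * Complex.normSq b = 1 := by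
      have h := h00
      rw [← Complex.normSq_eq_conj_mul_self, ← Complex.normSq_eq_conj_mul_self] at h
      exact_mod_cast h
    have hsq := Complex.sq_norm a
    nlinarith [norm_nonneg a, Complex.normSq_nonneg b, Nat.cast_nonneg (α := ℝ) m]
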